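/- Let G be a connected graph where every vertex is within distance c of some vertex of degree at least 3, and let H = (v_1, v_2, ...) be a geodesic half-line in G (the distance from v_n to v_1 equals n-1). Then there exist distinct vertices u_1, u_2, ... outside H and a strictly increasing function f : ℕ → ℕ with (n-1)(2c+3)+3 ≤ f(n) ≤ n(2c+3) such that u_n is adjacent to v_{f(n)}, and ∑_{n=1}^∞ 1/f(n) = ∞; i.e., H can be made into a neighbor-rich half-line. -/

import Mathlib

open Filter Finset

theorem neighbor_rich_half_line_exists
    {V : Type*} (G : SimpleGraph V) [∀ w : V, Fintype (G.neighborSet w)]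
    (hconn : G.Connected) (c : ℕ)
    (hdeg : ∀ w : V, ∃ w' : V, G.dist w w' ≤ c ∧ 3 ≤ G.degree w')
    (v : ℕ → V)
    (hadj : ∀ n : ℕ, 1 ≤ n → G.Adj (v n) (v (n + 1)))
    (hgeo : ∀ n : ℕ, 1 ≤ n → G.dist (v n) (v 1) = n - 1) :
    ∃ (u : ℕ → V) (f : ℕ → ℕ),
      (∀ m n : ℕ, 1 ≤ m → 1 ≤ n → u m = u n → m = n) ∧
      (∀ n : ℕ, 1 ≤ n → u n ∉ v '' (Set.Ici 1)) ∧
      StrictMonoOn f (Set.Ici 1) ∧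
      (∀ n : ℕ, 1 ≤ n → (n - 1) * (2 * c + 3) + 3 ≤ f n ∧ f n ≤ n * (2 * c + 3)) ∧
      (∀ n : ℕ, 1 ≤ n → G.Adj (u n) (v (f n))) ∧
      Tendsto (fun k => ∑ n ∈ Finset.Icc 1 k, (1 : ℝ) / (f n)) atTop atTop := by
  classical
  have hne : Nonempty V := ⟨v 0⟩
  -- key distance comparison along the geodesic half-line
  have hdk : ∀ a b : ℕ, 1 ≤ a → 1 ≤ b → a ≤ b + G.dist (v a) (v b) := by
    intro a b ha hb
    have ht := hconn.dist_triangle (u := v a) (v := v b) (w := v 1)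
    rw [hgeo a ha, hgeo b hb] at ht
    omega
  -- main geometric claim, in linear form
  have main0 : ∀ m : ℕ, c + 3 ≤ m → ∃ (u : V) (k : ℕ),
      (1 ≤ k ∧ m ≤ k + c ∧ k ≤ m + c) ∧ G.Adj u (v k) ∧ u ∉ v '' (Set.Ici 1) := by
    intro m hm
    have hm1 : 1 ≤ m := by omega
    obtain ⟨w', hw'd, hw'deg⟩ := hdeg (v m)
    obtain ⟨p, hp⟩ := (hconn (v m) w').exists_walk_length_eq_dist
    -- distances along the walk
    have hgv : ∀ i : ℕ, G.dist (v m) (p.getVert i) ≤ i := by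
      intro i
      induction i with
      | zero => simp
      | succ i ih =>
        by_cases hi : i < p.length
        · have ha' := p.adj_getVert_succ hi
          have h2 : G.dist (p.getVert i) (p.getVert (i + 1)) ≤ 1 := by
            simpa using SimpleGraph.dist_le ha'.toWalk
          have ht := hconn.dist_triangle (u := v m) (v := p.getVert i)
            (w := p.getVert (i + 1))
          omega
        · rw [p.getVert_of_length_le (by omega), ← p.getVert_of_length_le (le_of_not_gt hi)]
          omega
    by_cases hA : ∃ i, i ≤ p.length ∧ p.getVert i ∉ v '' (Set.Ici 1)
    · -- first vertex of the walk off the half-line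
      set i0 := Nat.find hA with hi0def
      have hi0 : i0 ≤ p.length ∧ p.getVert i0 ∉ v '' (Set.Ici 1) := Nat.find_spec hA
      have hi0pos : 1 ≤ i0 := by
        rcases Nat.eq_zero_or_pos i0 with h0 | h0
        · exfalso; apply hi0.2; rw [h0]; simp
          exact ⟨m, hm1, rfl⟩
        · exact h0
      have hprev : p.getVert (i0 - 1) ∈ v '' (Set.Ici 1) := by
        by_contra hcon
        exact Nat.find_min hA (by omega) ⟨by omega, hcon⟩
      obtain ⟨k, hk1, hkv⟩ := hprev
      refine ⟨p.getVert i0, k, ⟨hk1, ?_, ?_⟩, ?_, hi0.2⟩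
      · have hd : G.dist (v m) (v k) ≤ c := by
          have h1 := hgv (i0 - 1)
          rw [← hkv] at h1
          omega
        have := hdk m k hm1 hk1
        omega
      · have hd : G.dist (v k) (v m) ≤ c := by
          have h1 := hgv (i0 - 1)
          rw [← hkv] at h1
          rw [G.dist_comm]
          omega
        have := hdk k m hk1 hm1
        omega
      · have := p.adj_getVert_succ (i := i0 - 1) (by omega)
        rw [show i0 - 1 + 1 = i0 by omega] at this
        rw [← hkv] at this
        exact this.symm
    · -- whole walk on the half-line; endpoint has degree ≥ 3
      push_neg at hA
      have hw' : w' ∈ v '' (Set.Ici 1) := by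
        have := hA p.length le_rfl
        rwa [p.getVert_length] at this
      obtain ⟨j, hj1, hjv⟩ := hw'
      have hdj : G.dist (v m) (v j) ≤ c := by rw [hjv]; exact hw'd
      have hjlow : m ≤ j + c := by have := hdk m j hm1 hj1; omega
      have hjhigh : j ≤ m + c := by
        have := hdk j m hj1 hm1
        rw [G.dist_comm] at this
        omega
      have hj2 : 2 ≤ j := by omega
      -- degree ≥ 3 gives a neighbor off {v (j-1), v (j+1)}
      have hdeg3 : 3 ≤ (G.neighborFinset (v j)).card := by
        rw [← SimpleGraph.card_neighborFinset_eq_degree] at hw'deg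
        rw [hjv]; exact hw'deg
      have hcard : ({v (j - 1), v (j + 1)} : Finset V).card < (G.neighborFinset (v j)).card := by
        have : ({v (j - 1), v (j + 1)} : Finset V).card ≤ 2 := Finset.card_insert_le _ _ |>.trans (by simp)
        omega
      have hnsub : ¬ (G.neighborFinset (v j) ⊆ ({v (j - 1), v (j + 1)} : Finset V)) := by
        intro hsub
        exact absurd (Finset.card_le_card hsub) (by omega)
      obtain ⟨u, hu_mem, hu_not⟩ := Finset.not_subset.mp hnsub
      have hu_adj : G.Adj u (v j) := (SimpleGraph.mem_neighborFinset _ _ _ |>.mp hu_mem).symm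
      refine ⟨u, j, ⟨hj1, hjlow, hjhigh⟩, hu_adj, ?_⟩
      rintro ⟨i, hi1, hiv⟩
      have hadj' : G.Adj (v i) (v j) := hiv ▸ hu_adj
      have hd1 : G.dist (v i) (v j) ≤ 1 := by simpa using SimpleGraph.dist_le hadj'.toWalk
      have h1 := hdk i j hi1 hj1
      have h2 := hdk j i hj1 hi1
      rw [G.dist_comm] at h2
      have hij : i = j - 1 ∨ i = j ∨ i = j + 1 := by omega
      rcases hij with h | h | h
      · exact hu_not (by rw [← hiv, h]; simp)
      · rw [h] at hadj'; exact G.loopless.irrefl _ hadj'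
      · exact hu_not (by rw [← hiv, h]; simp)
  -- now apply at the midpoints of the windows
  have main : ∀ n : ℕ, 1 ≤ n → ∃ (u : V) (k : ℕ),
      ((n - 1) * (2 * c + 3) + 3 ≤ k ∧ k ≤ n * (2 * c + 3)) ∧ G.Adj u (v k) ∧
      u ∉ v '' (Set.Ici 1) := by
    intro n hn
    obtain ⟨n', rfl⟩ : ∃ n', n = n' + 1 := ⟨n - 1, by omega⟩
    obtain ⟨u, k, ⟨hk1, hlow, hhigh⟩, hadj', hnot⟩ :=
      main0 (n' * (2 * c + 3) + c + 3) (by omega)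
    refine ⟨u, k, ⟨?_, ?_⟩, hadj', hnot⟩
    · have h1 : (n' + 1 - 1) * (2 * c + 3) = n' * (2 * c + 3) := by simp
      rw [h1]; omega
    · have h2 : (n' + 1) * (2 * c + 3) = n' * (2 * c + 3) + (2 * c + 3) := by ring
      rw [h2]; omega
  choose! u f hwin hadj' hnot using main
  have hf_low : ∀ n : ℕ, 1 ≤ n → (n - 1) * (2 * c + 3) + 3 ≤ f n := fun n hn => (hwin n hn).1
  have hf_high : ∀ n : ℕ, 1 ≤ n → f n ≤ n * (2 * c + 3) := fun n hn => (hwin n hn).2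
  have hf1 : ∀ n : ℕ, 1 ≤ n → 1 ≤ f n := fun n hn => by have := hf_low n hn; omega
  -- f strictly monotone with a gap of ≥ 3
  have hgap : ∀ a b : ℕ, 1 ≤ a → a < b → f a + 3 ≤ f b := by
    intro a b ha hab
    have h1 := hf_high a ha
    have h2 := hf_low b (by omega)
    have h3 : a * (2 * c + 3) ≤ (b - 1) * (2 * c + 3) :=
      Nat.mul_le_mul_right _ (by omega)
    omega
  refine ⟨u, f, ?_, fun n hn => hnot n hn, ?_, fun n hn => hwin n hn, fun n hn => hadj' n hn, ?_⟩
  · -- distinctness of u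
    intro a b ha hb hab
    by_contra hne'
    have key : ∀ a b : ℕ, 1 ≤ a → a < b → u a = u b → False := by
      intro a b ha hab hu
      have ha1 : G.Adj (v (f a)) (u a) := (hadj' a ha).symm
      have hb1 : G.Adj (u b) (v (f b)) := hadj' b (by omega)
      rw [hu] at ha1
      have hd2 : G.dist (v (f a)) (v (f b)) ≤ 2 := by
        have := SimpleGraph.dist_le ((ha1.toWalk).append hb1.toWalk)
        simpa [SimpleGraph.Adj.toWalk] using this
      have := hdk (f b) (f a) (hf1 b (by omega)) (hf1 a ha)
      rw [G.dist_comm] at this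
      have := hgap a b ha hab
      omega
    rcases Nat.lt_trichotomy a b with h | h | h
    · exact key a b ha h hab
    · exact hne' h
    · exact key b a hb h hab.symm
  · -- strict monotonicity
    intro a ha b hb hab
    have := hgap a b ha hab
    omega
  · -- divergence
    have hlb : ∀ k : ℕ,
        (1 / (2 * (c : ℝ) + 3)) * ∑ i ∈ Finset.range k, (1 / (i + 1) : ℝ) ≤
        ∑ n ∈ Finset.Icc 1 k, (1 : ℝ) / (f n) := by
      intro k
      have h1 : ∑ n ∈ Finset.Icc 1 k, (1 : ℝ) / (n * (2 * (c : ℝ) + 3)) ≤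
          ∑ n ∈ Finset.Icc 1 k, (1 : ℝ) / (f n) := by
        apply Finset.sum_le_sum
        intro n hn
        have hn1 : 1 ≤ n := (Finset.mem_Icc.mp hn).1
        have hfn := hf_high n hn1
        have hfpos : (0 : ℝ) < (f n : ℝ) := by
          have := hf1 n hn1; positivity
        apply one_div_le_one_div_of_le hfpos
        have : ((f n : ℕ) : ℝ) ≤ ((n * (2 * c + 3) : ℕ) : ℝ) := by exact_mod_cast hfn
        calc ((f n : ℕ) : ℝ) ≤ ((n * (2 * c + 3) : ℕ) : ℝ) := this
          _ = (n : ℝ) * (2 * (c : ℝ) + 3) := by push_cast; ring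
      refine le_trans (le_of_eq ?_) h1
      rw [Finset.mul_sum]
      rw [show Finset.Icc 1 k = Finset.Ico 1 (k + 1) by rfl]
      rw [Finset.sum_Ico_eq_sum_range]
      simp only [Nat.add_sub_cancel]
      apply Finset.sum_congr rfl
      intro i _
      have hc : (2 * (c : ℝ) + 3) ≠ 0 := by positivity
      have hi : ((1 + i : ℕ) : ℝ) = (i : ℝ) + 1 := by push_cast; ring
      rw [hi]
      field_simp
    have hconst : (0 : ℝ) < 1 / (2 * (c : ℝ) + 3) := by positivity
    have hharm := Real.tendsto_sum_range_one_div_nat_succ_atTop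
    have hmul : Tendsto (fun k => (1 / (2 * (c : ℝ) + 3)) *
        ∑ i ∈ Finset.range k, (1 / (i + 1) : ℝ)) atTop atTop :=
      hharm.const_mul_atTop hconst
    exact tendsto_atTop_mono hlb hmul
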